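/- Li₂(α/√5) + Li₂(-β/√5) = π²/6 + ln²(α) - (1/4)·ln²(5), where α = (1+√5)/2 and β = (1-√5)/2. -/

import Mathlib

noncomputable def Li2 (x : ℝ) : ℝ := ∑' n : ℕ, x ^ (n + 1) / ((n : ℝ) + 1) ^ 2

open Real Set Filter Topology

set_option linter.unnecessarySeqFocus false

lemma li2_summable_bound : Summable (fun n : ℕ => 1 / ((n : ℝ) + 1) ^ 2) := by
  have h := (Real.summable_one_div_nat_pow (p := 2)).mpr one_lt_two
  have h2 := (summable_nat_add_iff 1).mpr h
  refine h2.congr fun n => ?_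
  push_cast
  ring

lemma li2_hasDerivAt {x : ℝ} (hx : |x| < 1) :
    HasDerivAt Li2 (∑' n : ℕ, x ^ n / ((n : ℝ) + 1)) x := by
  set r : ℝ := (|x| + 1) / 2 with hr
  have hr0 : 0 < r := by positivity
  have hr1 : r < 1 := by rw [hr]; linarith
  have hxr : |x| < r := by rw [hr]; linarith
  have hu : Summable (fun n : ℕ => r ^ n) := summable_geometric_of_lt_one hr0.le hr1
  have key := hasDerivAt_tsum_of_isPreconnected (F := ℝ)
      (g := fun (n : ℕ) (y : ℝ) => y ^ (n + 1) / ((n : ℝ) + 1) ^ 2)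
      (g' := fun (n : ℕ) (y : ℝ) => y ^ n / ((n : ℝ) + 1))
      (t := Ioo (-r) r) (y₀ := 0) (y := x)
      hu isOpen_Ioo (convex_Ioo _ _).isPreconnected
      (fun n y _ => by
        have h1 : HasDerivAt (fun y : ℝ => y ^ (n + 1))
            (((n : ℝ) + 1) * y ^ n) y := by
          simpa using hasDerivAt_pow (n + 1) y
        have h2 := h1.div_const (((n : ℝ) + 1) ^ 2)
        refine h2.congr_deriv ?_
        have hn : ((n : ℝ) + 1) ≠ 0 := by positivity
        field_simp)
      (fun n y hy => by
        have hyr : |y| ≤ r := (abs_lt.mpr ⟨hy.1, hy.2⟩).le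
        have hn : (0 : ℝ) < (n : ℝ) + 1 := by positivity
        rw [Real.norm_eq_abs, abs_div, abs_pow, abs_of_pos hn]
        calc |y| ^ n / ((n : ℝ) + 1) ≤ r ^ n / 1 := by
              gcongr <;>
                first
                  | exact abs_nonneg y
                  | exact hyr
                  | positivity
                  | linarith [Nat.cast_nonneg (α := ℝ) n]
          _ = r ^ n := div_one _)
      ⟨by linarith, hr0⟩
      (by
        refine summable_zero.congr fun n => ?_
        simp)
      (abs_lt.mp hxr)
  exact key

lemma li2_hasDerivAt' {x : ℝ} (h0 : 0 < x) (h1 : x < 1) :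
    HasDerivAt Li2 (-Real.log (1 - x) / x) x := by
  have hx : |x| < 1 := abs_lt.mpr ⟨by linarith, h1⟩
  have h := li2_hasDerivAt hx
  have hs := Real.hasSum_pow_div_log_of_abs_lt_one hx
  have hs2 : HasSum (fun n : ℕ => x * (x ^ n / ((n : ℝ) + 1))) (-Real.log (1 - x)) := by
    refine hs.congr_fun fun n => ?_
    rw [pow_succ']
    ring
  have hs3 : HasSum (fun n : ℕ => x ^ n / ((n : ℝ) + 1)) (x⁻¹ * -Real.log (1 - x)) := by
    have := hs2.mul_left x⁻¹
    refine this.congr_fun fun n => ?_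
    rw [inv_mul_cancel_left₀ h0.ne']
  rw [hs3.tsum_eq] at h
  convert h using 1
  rw [div_eq_mul_inv, mul_comm]
lemma li2_continuousOn : ContinuousOn Li2 (Icc (-1 : ℝ) 1) := by
  apply continuousOn_tsum (u := fun n : ℕ => 1 / ((n : ℝ) + 1) ^ 2)
    (fun i => (continuous_pow (i + 1)).continuousOn.div_const _) li2_summable_bound
  intro n x hx
  have hx1 : |x| ≤ 1 := abs_le.mpr ⟨hx.1, hx.2⟩
  have hn : (0 : ℝ) < ((n : ℝ) + 1) ^ 2 := by positivity
  rw [Real.norm_eq_abs, abs_div, abs_pow, abs_of_pos hn]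
  gcongr
  exact pow_le_one₀ (abs_nonneg x) hx1

lemma li2_zero : Li2 0 = 0 := by
  simp [Li2]

lemma li2_one : Li2 1 = Real.pi ^ 2 / 6 := by
  have h1 : HasSum (fun n : ℕ => (1 : ℝ) / ((n + 1 : ℕ) : ℝ) ^ 2) (Real.pi ^ 2 / 6) :=
    (hasSum_nat_add_iff (f := fun n : ℕ => (1 : ℝ) / (n : ℝ) ^ 2) 1).mpr
      (by simpa using hasSum_zeta_two)
  have h2 : HasSum (fun n : ℕ => (1 : ℝ) ^ (n + 1) / ((n : ℝ) + 1) ^ 2) (Real.pi ^ 2 / 6) := by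
    refine h1.congr_fun fun n => ?_
    push_cast
    ring
  exact h2.tsum_eq

lemma li2_reflection {x : ℝ} (hx : x ∈ Ioo (0 : ℝ) 1) :
    Li2 x + Li2 (1 - x) + Real.log x * Real.log (1 - x) = Real.pi ^ 2 / 6 := by
  set g : ℝ → ℝ := fun y => Li2 y + Li2 (1 - y) + Real.log y * Real.log (1 - y) with hg
  have hderiv : ∀ y ∈ Ioo (0 : ℝ) 1, HasDerivAt g 0 y := by
    intro y hy
    obtain ⟨hy0, hy1⟩ := hy
    have hy1' : 0 < 1 - y := by linarith
    have d1 : HasDerivAt Li2 (-Real.log (1 - y) / y) y := li2_hasDerivAt' hy0 hy1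
    have hid : HasDerivAt (fun z : ℝ => 1 - z) (-1) y := by
      simpa using (hasDerivAt_id y).const_sub 1
    have d2' : HasDerivAt Li2 (-Real.log (1 - (1 - y)) / (1 - y)) (1 - y) :=
      li2_hasDerivAt' hy1' (by linarith)
    have d2 : HasDerivAt (fun z : ℝ => Li2 (1 - z))
        ((-Real.log (1 - (1 - y)) / (1 - y)) * (-1)) y := d2'.comp y hid
    have l1 : HasDerivAt Real.log y⁻¹ y := Real.hasDerivAt_log hy0.ne'
    have l2 : HasDerivAt (fun z : ℝ => Real.log (1 - z)) ((1 - y)⁻¹ * (-1)) y :=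
      (Real.hasDerivAt_log hy1'.ne').comp y hid
    have d3 : HasDerivAt (fun z : ℝ => Real.log z * Real.log (1 - z))
        (y⁻¹ * Real.log (1 - y) + Real.log y * ((1 - y)⁻¹ * (-1))) y := l1.mul l2
    have dall := (d1.add d2).add d3
    have hsimp : 1 - (1 - y) = y := by ring
    rw [hsimp] at dall
    refine dall.congr_deriv ?_
    field_simp
    ring
  have hconst : ∀ a ∈ Ioo (0 : ℝ) 1, ∀ b ∈ Ioo (0 : ℝ) 1, a ≤ b → g b = g a := by
    intro a ha b hb hab
    have hsub : Icc a b ⊆ Ioo (0 : ℝ) 1 := fun z hz =>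
      ⟨lt_of_lt_of_le ha.1 hz.1, lt_of_le_of_lt hz.2 hb.2⟩
    exact constant_of_has_deriv_right_zero
      (fun z hz => (hderiv z (hsub hz)).continuousAt.continuousWithinAt)
      (fun z hz => (hderiv z (hsub (Ico_subset_Icc_self hz))).hasDerivWithinAt)
      b (right_mem_Icc.mpr hab)
  have hne : (𝓝[Ioo (0 : ℝ) 1] (0 : ℝ)).NeBot := by
    apply mem_closure_iff_nhdsWithin_neBot.mp
    rw [closure_Ioo (by norm_num : (0 : ℝ) ≠ 1)]
    exact ⟨le_refl 0, by norm_num⟩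
  have t1 : Tendsto Li2 (𝓝[Ioo (0 : ℝ) 1] 0) (𝓝 0) := by
    have := (li2_hasDerivAt (x := 0) (by norm_num)).continuousAt
    rw [ContinuousAt, li2_zero] at this
    exact this.mono_left nhdsWithin_le_nhds
  have t2 : Tendsto (fun x : ℝ => Li2 (1 - x)) (𝓝[Ioo (0 : ℝ) 1] 0) (𝓝 (Real.pi ^ 2 / 6)) := by
    have hmap : Tendsto (fun x : ℝ => 1 - x) (𝓝[Ioo (0 : ℝ) 1] 0) (𝓝[Icc (-1 : ℝ) 1] 1) := by
      rw [tendsto_nhdsWithin_iff]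
      constructor
      · have : Tendsto (fun x : ℝ => 1 - x) (𝓝 0) (𝓝 (1 - 0)) :=
          (continuous_const.sub continuous_id).tendsto 0
        simpa using this.mono_left nhdsWithin_le_nhds
      · refine eventually_mem_nhdsWithin.mono fun y hy => ?_
        constructor <;> [linarith [hy.2]; linarith [hy.1]]
    have hcw : ContinuousWithinAt Li2 (Icc (-1 : ℝ) 1) 1 :=
      li2_continuousOn 1 (by constructor <;> norm_num)
    have := hcw.tendsto.comp hmap
    rwa [li2_one] at this
  have t3 : Tendsto (fun x : ℝ => Real.log x * Real.log (1 - x))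
      (𝓝[Ioo (0 : ℝ) 1] 0) (𝓝 0) := by
    have a1 : Tendsto (fun x : ℝ => Real.log x * x) (𝓝[>] (0 : ℝ)) (𝓝 0) := by
      simpa only [Real.rpow_one] using tendsto_log_mul_rpow_nhdsGT_zero one_pos
    have a2 : Tendsto (fun x : ℝ => Real.log (1 - x) / x) (𝓝[≠] (0 : ℝ)) (𝓝 (-1)) := by
      have hd : HasDerivAt (fun z : ℝ => Real.log (1 - z)) (-1) 0 := by
        have hid : HasDerivAt (fun z : ℝ => 1 - z) (-1) 0 := by
          simpa using (hasDerivAt_id (0 : ℝ)).const_sub 1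
        have := (Real.hasDerivAt_log (by norm_num : (1 : ℝ) - 0 ≠ 0)).comp 0 hid
        simp at this
        exact this
      have := hasDerivAt_iff_tendsto_slope.mp hd
      refine this.congr fun y => ?_
      simp [slope_fun_def_field]
    have hle1 : 𝓝[Ioo (0 : ℝ) 1] (0 : ℝ) ≤ 𝓝[>] (0 : ℝ) :=
      nhdsWithin_mono _ fun y hy => hy.1
    have hle2 : 𝓝[Ioo (0 : ℝ) 1] (0 : ℝ) ≤ 𝓝[≠] (0 : ℝ) :=
      nhdsWithin_mono _ fun y hy => ne_of_gt hy.1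
    have hmul := (a1.mono_left hle1).mul (a2.mono_left hle2)
    rw [zero_mul] at hmul
    refine hmul.congr' ?_
    refine eventually_mem_nhdsWithin.mono fun y hy => ?_
    have hy0 : y ≠ 0 := ne_of_gt hy.1
    field_simp
  have hlim : Tendsto g (𝓝[Ioo (0 : ℝ) 1] 0) (𝓝 (Real.pi ^ 2 / 6)) := by
    have := (t1.add t2).add t3
    rw [zero_add, add_zero] at this
    exact this
  have heq : ∀ y ∈ Ioo (0 : ℝ) 1, g y = g x := by
    intro y hy
    rcases le_total x y with h | h
    · exact hconst x hx y hy h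
    · exact (hconst y hy x hx h).symm
  have hconstlim : Tendsto (fun _ : ℝ => g x) (𝓝[Ioo (0 : ℝ) 1] 0) (𝓝 (Real.pi ^ 2 / 6)) := by
    refine hlim.congr' ?_
    exact eventually_mem_nhdsWithin.mono fun y hy => (heq y hy)
  exact tendsto_nhds_unique tendsto_const_nhds hconstlim

theorem stmt_17 :
    Li2 ((1 + Real.sqrt 5) / 2 / Real.sqrt 5) + Li2 (-((1 - Real.sqrt 5) / 2) / Real.sqrt 5) =
      Real.pi ^ 2 / 6 + Real.log ((1 + Real.sqrt 5) / 2) ^ 2 - (1 / 4) * Real.log 5 ^ 2 := by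
  set s : ℝ := Real.sqrt 5 with hs
  have hs2 : s ^ 2 = 5 := Real.sq_sqrt (by norm_num)
  have hsgt : 2 < s := by
    rw [hs]
    rw [show (2 : ℝ) = Real.sqrt 4 by rw [show (4 : ℝ) = 2 ^ 2 by norm_num, Real.sqrt_sq]; norm_num]
    exact Real.sqrt_lt_sqrt (by norm_num) (by norm_num)
  have hs0 : 0 < s := by linarith
  set x : ℝ := (1 + s) / 2 / s with hxdef
  have hx0 : 0 < x := by positivity
  have hx1 : x < 1 := by
    rw [hxdef, div_div, div_lt_one (by positivity)]
    linarith
  have heq : -((1 - s) / 2) / s = 1 - x := by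
    rw [hxdef]
    field_simp
    ring
  have href := li2_reflection (x := x) ⟨hx0, hx1⟩
  rw [heq]
  have hL : Real.log x = Real.log ((1 + s) / 2) - (1 / 2) * Real.log 5 := by
    rw [hxdef, Real.log_div (by positivity) hs0.ne', hs, Real.log_sqrt (by norm_num)]
    ring
  have hinv : (1 - x : ℝ) = ((1 + s) / 2)⁻¹ / s := by
    rw [hxdef]
    rw [eq_div_iff hs0.ne', inv_eq_one_div]
    field_simp
    nlinarith [hs2]
  have hM : Real.log (1 - x) = -Real.log ((1 + s) / 2) - (1 / 2) * Real.log 5 := by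
    rw [hinv, Real.log_div (by positivity) hs0.ne', Real.log_inv, hs,
      Real.log_sqrt (by norm_num)]
    ring
  have : Li2 x + Li2 (1 - x) = Real.pi ^ 2 / 6 - Real.log x * Real.log (1 - x) := by
    linarith [href]
  rw [this, hL, hM]
  ring
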